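/- In A_n^m, suppose p ∈ {m+2,...,n} and r ∈ {m+1,...,p−1} are such that B_{r,p} := Σ_{s=m+1}^{p−1} T_s Υ^s_{r,p} ≠ 0 (for some choice of scalars T_s, equivalently such that Υ^{r}_{k,p} ≠ 0 for some k ∈ {m+1,...,p−1}). Then u_p = u_r, i.e. the unique idempotent acting as identity on I_p coincides with the one acting as identity on I_r. -/

import Mathlib

/-- Lemma 2: if `B_{r,p} ≠ 0` for some choice of scalars `T_s`, i.e. if some
structure constant `Υ^s_{r,p}` with `m ≤ s < p` is nonzero, then `u p = u r`. -/
theorem lemma_two (n m : ℕ) (hm : m ≤ n) (A : Type*)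
    [CommRing A] [Algebra ℂ A]
    (I : Module.Basis (Fin n) ℂ A)
    (hidem : ∀ r s : Fin n, r.val < m → s.val < m →
      I r * I s = if r = s then I r else 0)
    (Υ : Fin n → Fin n → Fin n → ℂ)
    (hnil : ∀ r s : Fin n, m ≤ r.val → m ≤ s.val →
      I r * I s = ∑ k ∈ Finset.univ.filter (fun k : Fin n => max r.val s.val < k.val),
        Υ r s k • I k)
    (u : Fin n → Fin n)
    (hu : ∀ s : Fin n, m ≤ s.val → (u s).val < m)
    (hmul3 : ∀ s : Fin n, m ≤ s.val → ∀ r : Fin n, r.val < m →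
      I r * I s = if r = u s then I s else 0)
    (p r : Fin n) (hp : m ≤ p.val) (hr : m ≤ r.val) (hrp : r < p)
    -- `B_{r,p} ≠ 0` for some scalars `T_s`; equivalently some `Υ^s_{r,p} ≠ 0`
    (hB : ∃ s : Fin n, m ≤ s.val ∧ s < p ∧ Υ r s p ≠ 0) :
    u p = u r := by

  obtain ⟨s, hs, hsp, hΥ⟩ := hB
  have hur : (u r).val < m := hu r hr
  -- I (u r) * (I r * I s) = I r * I s
  have h1 : I (u r) * (I r * I s) = I r * I s := by
    rw [← mul_assoc, hmul3 r hr (u r) hur, if_pos rfl]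
  have hE := hnil r s hr hs
  set F := Finset.univ.filter (fun k : Fin n => max r.val s.val < k.val) with hF
  have h2 : I (u r) * (∑ k ∈ F, Υ r s k • I k)
      = ∑ k ∈ F, (if u r = u k then Υ r s k else 0) • I k := by
    rw [Finset.mul_sum]
    refine Finset.sum_congr rfl (fun k hk => ?_)
    have hkm : m ≤ k.val := by
      have := (Finset.mem_filter.mp hk).2
      omega
    rw [mul_smul_comm, hmul3 k hkm (u r) hur]
    split <;> simp
  have hsum : ∑ k ∈ F, (Υ r s k - (if u r = u k then Υ r s k else 0)) • I k = 0 := by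
    simp only [sub_smul, Finset.sum_sub_distrib]
    rw [← hE, ← h2, ← hE, h1]
    ring
  have hpF : p ∈ F := by
    simp only [hF, Finset.mem_filter, Finset.mem_univ, true_and]
    have h1 := Fin.lt_iff_val_lt_val.mp hrp
    have h2 := Fin.lt_iff_val_lt_val.mp hsp
    omega
  have hzero := linearIndependent_iff'.mp I.linearIndependent F
    (fun k => Υ r s k - (if u r = u k then Υ r s k else 0)) hsum p hpF
  by_contra hne
  simp only [if_neg (fun h : u r = u p => hne h.symm), sub_zero] at hzero
  exact hΥ hzero
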